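/- Let S be a non-trivial multiplicative subset of ℤ (0 ∉ S, S ≠ {±1}, and S does not contain all primes) and fix r ∈ ℕ, ε > 0. If every element w of S⁻¹ℤ whose image in ℝ lies in the interval (-ε, ε) can be written as a sum of r irreducible elements of S⁻¹ℤ, then every element of S⁻¹ℤ can be written as a sum of r irreducible elements of S⁻¹ℤ. -/

import Mathlib

theorem stmt_5 (S : Submonoid ℤ) (h0 : (0 : ℤ) ∉ S)
    (hne1 : (S : Set ℤ) ≠ {1}) (hne2 : (S : Set ℤ) ≠ {1, -1})
    (hp : ∃ p : ℤ, Prime p ∧ 0 < p ∧ p ∉ S)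
    (r : ℕ) (ε : ℝ) (hε : 0 < ε)
    (φ : Localization S →+* ℚ)
    (hyp : ∀ w : Localization S, -ε < (φ w : ℝ) → (φ w : ℝ) < ε →
      ∃ f : Fin r → Localization S, (∀ i, Irreducible (f i)) ∧ w = ∑ i, f i) :
    ∀ w : Localization S,
      ∃ f : Fin r → Localization S, (∀ i, Irreducible (f i)) ∧ w = ∑ i, f i := by
  have hφa : ∀ k : ℤ, φ (algebraMap ℤ (Localization S) k) = (k : ℚ) := by
    intro k
    have := eq_intCast (φ.comp (algebraMap ℤ (Localization S))) k
    simpa using this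
  -- find s ∈ S with 2 ≤ |s|
  obtain ⟨s, hs, hs2⟩ : ∃ s ∈ S, 2 ≤ |s| := by
    by_contra h
    push_neg at h
    have hsub : ∀ t ∈ S, t = 1 ∨ t = -1 := by
      intro t ht
      have h1 : |t| < 2 := h t ht
      have h0' : t ≠ 0 := fun e => h0 (e ▸ ht)
      rcases abs_lt.mp h1 with ⟨ha, hb⟩
      omega
    by_cases hneg : (-1 : ℤ) ∈ S
    · apply hne2
      ext x
      simp only [SetLike.mem_coe, Set.mem_insert_iff, Set.mem_singleton_iff]
      constructor
      · intro hx; exact hsub x hx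
      · rintro (rfl | rfl)
        · exact S.one_mem
        · exact hneg
    · apply hne1
      ext x
      simp only [SetLike.mem_coe, Set.mem_singleton_iff]
      constructor
      · intro hx
        rcases hsub x hx with rfl | rfl
        · rfl
        · exact absurd hx hneg
      · rintro rfl; exact S.one_mem
  intro w
  -- s is a unit in the localization
  obtain ⟨u, hu⟩ := IsLocalization.map_units (Localization S) (⟨s, hs⟩ : S)
  have hφu : φ (↑u) = (s : ℚ) := by rw [hu]; exact hφa s
  have hsz : s ≠ 0 := fun e => h0 (e ▸ hs)
  have hs0 : (s : ℚ) ≠ 0 := Int.cast_ne_zero.mpr hsz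
  have hφuinv : φ (↑u⁻¹) = (s : ℚ)⁻¹ := by
    have : φ (↑u) * φ (↑u⁻¹) = 1 := by
      rw [← map_mul]; norm_cast; rw [mul_inv_cancel]; exact map_one φ
    field_simp [hφu] at this ⊢
    rw [hφu] at this; linarith [this]
  -- choose n with |φ w| < ε * 2^n
  obtain ⟨n, hn⟩ : ∃ n : ℕ, (|(φ w : ℝ)| / ε) < 2 ^ n :=
    pow_unbounded_of_one_lt _ (by norm_num)
  have hbound : |(φ w : ℝ)| < ε * 2 ^ n := by
    rw [div_lt_iff₀ hε] at hn
    linarith [hn]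
  set v : (Localization S)ˣ := u ^ n with hv
  set w' : Localization S := ↑v⁻¹ * w with hw'
  have hφv : φ (↑v) = (s : ℚ) ^ n := by
    rw [hv]; push_cast [Units.val_pow_eq_pow_val]
    rw [map_pow, hφu]
  have hφvinv : φ (↑v⁻¹) = ((s : ℚ) ^ n)⁻¹ := by
    have hvv : (↑v⁻¹ : Localization S) = (↑u⁻¹ : Localization S) ^ n := by
      rw [hv, ← inv_pow, Units.val_pow_eq_pow_val]
    rw [hvv, map_pow, hφuinv, inv_pow]
  have hsabs : (2 : ℝ) ≤ |(s : ℚ)| := by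
    have : (2 : ℚ) ≤ |(s : ℚ)| := by exact_mod_cast hs2
    exact_mod_cast this
  have hsmall : |(φ w' : ℝ)| < ε := by
    have h1 : φ w' = ((s : ℚ) ^ n)⁻¹ * φ w := by rw [hw', map_mul, hφvinv]
    have h2 : ((φ w' : ℚ) : ℝ) = ((((s : ℚ) : ℝ)) ^ n)⁻¹ * ((φ w : ℚ) : ℝ) := by
      rw [h1]; push_cast; ring
    rw [h2, abs_mul, abs_inv, abs_pow]
    have h2n : (2 : ℝ) ^ n ≤ |((s : ℚ) : ℝ)| ^ n :=
      pow_le_pow_left₀ (by norm_num) (by exact_mod_cast hsabs) n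
    have hpos : (0 : ℝ) < |((s : ℚ) : ℝ)| ^ n := by
      have : (0:ℝ) < (2:ℝ)^n := by positivity
      linarith
    rw [inv_mul_lt_iff₀ hpos]
    calc |((φ w : ℚ) : ℝ)| < ε * 2 ^ n := hbound
      _ ≤ ε * |((s : ℚ) : ℝ)| ^ n := mul_le_mul_of_nonneg_left h2n (le_of_lt hε)
      _ = |((s : ℚ) : ℝ)| ^ n * ε := mul_comm _ _
  obtain ⟨f, hf, hsum⟩ := hyp w' (neg_lt_of_abs_lt hsmall) (lt_of_abs_lt hsmall)
  refine ⟨fun i => ↑v * f i, fun i => ?_, ?_⟩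
  · exact (irreducible_isUnit_mul v.isUnit).mpr (hf i)
  · rw [← Finset.mul_sum, ← hsum, hw', ← mul_assoc]
    norm_cast
    rw [mul_inv_cancel, Units.val_one, one_mul]
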